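/- Let C > 0 be a real number and set H = 1/(2·cosh(πC) − 1). Then √(−3H² + 2H + 1) = 2H·e^{πC} − H − 1, where the right-hand side is nonnegative. Consequently, for any Λ, the first coefficients of the half-return time expansions agree: (1 + e^{−πC})Λ/(C²+1) = 2HΛ(e^{πC} + 1)/((C²+1)(√(−3H²+2H+1) + H + 1)); that is, the first coefficient γ₁ = γ₁^X − γ₁^Y of the time-matching function vanishes at H = H̄. -/

import Mathlib

open Real

/-- At the critical slope H = 1/(2cosh(πC) − 1) with C > 0, one has
√(−3H²+2H+1) = 2H·e^{πC} − H − 1 ≥ 0, and consequently the leading coefficients of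
the half-return time expansions of X and Y coincide: the first coefficient of the
time-matching function vanishes. -/
theorem first_coefficient_vanishes (C : ℝ) (hC : 0 < C) :
    let H : ℝ := 1 / (2 * Real.cosh (π * C) - 1)
    (0 ≤ 2 * H * Real.exp (π * C) - H - 1) ∧
    Real.sqrt (-3 * H ^ 2 + 2 * H + 1) = 2 * H * Real.exp (π * C) - H - 1 ∧
    ∀ Λ : ℝ,
      (1 + Real.exp (-π * C)) * Λ / (C ^ 2 + 1) =
        2 * H * Λ * (Real.exp (π * C) + 1) /
          ((C ^ 2 + 1) * (Real.sqrt (-3 * H ^ 2 + 2 * H + 1) + H + 1)) := by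
  intro H
  have hπC : 0 < π * C := mul_pos Real.pi_pos hC
  set t := Real.exp (π * C) with htdef
  have ht0 : 0 < t := Real.exp_pos _
  have ht : 1 < t := by
    rw [htdef]
    exact Real.one_lt_exp_iff.mpr hπC
  have hq : (0:ℝ) < t ^ 2 - t + 1 := by nlinarith
  have hq' : t ^ 2 - t + 1 ≠ 0 := hq.ne'
  have hq'' : t * (t - 1) + 1 ≠ 0 := by nlinarith
  have hcosh2 : 2 * Real.cosh (π * C) - 1 = (t ^ 2 - t + 1) / t := by
    rw [Real.cosh_eq, Real.exp_neg]
    field_simp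
    ring
  have hH : H = t / (t ^ 2 - t + 1) := by
    show 1 / (2 * Real.cosh (π * C) - 1) = _
    rw [hcosh2, one_div_div]
  have hB : 2 * H * t - H - 1 = (t ^ 2 - 1) / (t ^ 2 - t + 1) := by
    rw [hH]
    field_simp
    ring
  have hBnn : 0 ≤ 2 * H * t - H - 1 := by
    rw [hB]
    apply div_nonneg _ hq.le
    nlinarith
  have hA : -3 * H ^ 2 + 2 * H + 1 = (2 * H * t - H - 1) ^ 2 := by
    rw [hB, hH]
    field_simp
    ring
  have hsqrt : Real.sqrt (-3 * H ^ 2 + 2 * H + 1) = 2 * H * t - H - 1 := by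
    rw [hA, Real.sqrt_sq hBnn]
  refine ⟨hBnn, hsqrt, fun Λ => ?_⟩
  rw [hsqrt]
  have hsum : 2 * H * t - H - 1 + H + 1 = 2 * t ^ 2 / (t ^ 2 - t + 1) := by
    rw [hB, hH]
    field_simp
    ring
  rw [hsum]
  have hC2 : (0:ℝ) < C ^ 2 + 1 := by positivity
  have hexp : Real.exp (-π * C) = 1 / t := by
    rw [neg_mul, Real.exp_neg, htdef, inv_eq_one_div]
  rw [hexp, hH]
  field_simp
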